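/- Let Γ ⊆ ℤ^{1+d} be a subsemigroup contained in ℕ × ℤᵈ generating ℤ^{1+d} as a group, and suppose |Γ ∩ ({k} × ℤᵈ)| < ∞ for all k. Let ∇ be the closed convex cone generated by Γ and Δ = ∇ ∩ ({1} × ℝᵈ). If there exists γ ∈ Γ with (∇ + γ) ∩ ℤ^{1+d} ⊆ Γ (Khovanskii's property), then |Γ ∩ ({k} × ℤᵈ)| / kᵈ → vol(Δ) as k → ∞, where vol is d-dimensional Lebesgue measure on {1} × ℝᵈ ≅ ℝᵈ and Δ is assumed bounded of dimension d. -/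

import Mathlib

open MeasureTheory Filter

/-- The embedding of the lattice `ℤ × ℤᵈ` into `ℝ × ℝᵈ`. -/
def latticeEmb (d : ℕ) (x : ℤ × (Fin d → ℤ)) : ℝ × (Fin d → ℝ) :=
  ((x.1 : ℝ), fun i => (x.2 i : ℝ))

section Aux

open BoxIntegral BoxIntegral.unitPartition

/-- Lattice points in a bounded set (after scaling) form a finite set. -/
lemma latFinite {d : ℕ} (s : Set (Fin d → ℝ)) (hb : Bornology.IsBounded s) (c : ℝ) (hc : 0 < c) :
    {μ : Fin d → ℤ | (fun i => (μ i : ℝ) / c) ∈ s}.Finite := by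
  obtain ⟨R, hR⟩ := hb.subset_closedBall 0
  have : {μ : Fin d → ℤ | (fun i => (μ i : ℝ) / c) ∈ s} ⊆
      Set.pi Set.univ (fun _ : Fin d => Set.Icc (-(⌈c * R⌉)) ⌈c * R⌉) := by
    intro μ hμ
    have h1 := hR hμ
    rw [Metric.mem_closedBall, dist_zero_right] at h1
    intro i _
    have h2 : |(μ i : ℝ) / c| ≤ R := by
      calc |(μ i : ℝ) / c| = ‖(fun i => (μ i : ℝ) / c) i‖ := rfl
        _ ≤ _ := norm_le_pi_norm (fun i => (μ i : ℝ) / c) i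
        _ ≤ R := h1
    have h3 : |(μ i : ℝ)| ≤ c * R := by
      rw [abs_div, abs_of_pos hc] at h2
      calc |(μ i : ℝ)| = c * (|(μ i : ℝ)| / c) := by field_simp
        _ ≤ c * R := by exact mul_le_mul_of_nonneg_left h2 hc.le
    have h4 : |(μ i : ℝ)| ≤ (⌈c * R⌉ : ℝ) := h3.trans (Int.le_ceil _)
    rw [← Int.cast_abs, Int.cast_le] at h4
    exact Set.mem_Icc.mpr (abs_le.mp h4)
  exact Set.Finite.subset (Set.Finite.pi (fun _ => Set.finite_Icc _ _)) this

/-- The Riemann sum of the indicator of `s` over the unit partition of mesh `1/n` counts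
the lattice points `μ` with `μ/n ∈ s`. -/
lemma sum_eq {d : ℕ} (n : ℕ) [NeZero n] (s : Set (Fin d → ℝ)) {B : Box (Fin d)}
    (hB : hasIntegralVertices B) (hsB : s ⊆ B) :
    integralSum (s.indicator fun _ => (1 : ℝ)) (volume : Measure (Fin d → ℝ)).toBoxAdditive.toSMul
      (prepartition n B)
    = ({μ : Fin d → ℤ | (fun i => (μ i : ℝ) / n) ∈ s}.ncard : ℝ) / (n : ℝ) ^ d := by
  classical
  have hboxes : (prepartition n B).boxes = Finset.image (fun ν => box n ν) (admissibleIndex n B) := rfl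
  rw [integralSum, hboxes, Finset.sum_image (fun a _ b _ h => box_injective n h)]
  have hvol : ∀ ν : Fin d → ℤ, ((volume : Measure (Fin d → ℝ)).toBoxAdditive.toSMul (box n ν))
      ((s.indicator fun _ => (1:ℝ)) ((prepartition n B).tag (box n ν)))
      = (1 / (n:ℝ)^d) * ((s.indicator fun _ => (1:ℝ)) ((prepartition n B).tag (box n ν))) := by
    intro ν
    rw [BoxAdditiveMap.toSMul_apply, Measure.toBoxAdditive_apply, measureReal_def, volume_box, smul_eq_mul]
    congr 1
    rw [ENNReal.toReal_div]
    simp [Fintype.card_fin]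
  have step1 : ∑ ν ∈ admissibleIndex n B,
      ((volume : Measure (Fin d → ℝ)).toBoxAdditive.toSMul (box n ν))
      ((s.indicator fun _ => (1:ℝ)) ((prepartition n B).tag (box n ν)))
      = (1 / (n:ℝ)^d) * ((admissibleIndex n B).filter (fun ν => tag n ν ∈ s)).card := by
    rw [Finset.sum_congr rfl (fun ν hν => by
      rw [hvol ν, prepartition_tag n hν])]
    rw [← Finset.mul_sum]
    congr 1
    rw [Finset.sum_indicator_eq_sum_filter]
    simp
  rw [step1]
  have hsetf : {ν : Fin d → ℤ | tag n ν ∈ s}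
      = ((admissibleIndex n B).filter (fun ν => tag n ν ∈ s) : Finset (Fin d → ℤ)) := by
    ext ν
    simp only [Set.mem_setOf_eq, Finset.coe_filter, Finset.mem_coe]
    constructor
    · intro h
      refine ⟨?_, h⟩
      have := mem_admissibleIndex_of_mem_box n hB (hsB h)
      rwa [index_tag] at this
    · exact fun h => h.2
  have hcard1 : {ν : Fin d → ℤ | tag n ν ∈ s}.ncard
      = ((admissibleIndex n B).filter (fun ν => tag n ν ∈ s)).card := by
    rw [hsetf, Set.ncard_coe_finset]
  have hcard2 : {μ : Fin d → ℤ | (fun i => (μ i : ℝ) / n) ∈ s}.ncard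
      = {ν : Fin d → ℤ | tag n ν ∈ s}.ncard := by
    have hpre : {ν : Fin d → ℤ | tag n ν ∈ s}
        = (fun ν : Fin d → ℤ => ν + 1) ⁻¹' {μ : Fin d → ℤ | (fun i => (μ i : ℝ) / n) ∈ s} := by
      ext ν
      simp only [Set.mem_setOf_eq, Set.mem_preimage]
      have : (fun i => (((ν + 1) : Fin d → ℤ) i : ℝ) / n) = tag n ν := by
        funext i
        simp [tag_apply]
      rw [this]
    have hsurj : Function.Bijective (fun ν : Fin d → ℤ => ν + 1) :=
      (Equiv.addRight (1 : Fin d → ℤ)).bijective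
    rw [hpre]
    conv_lhs => rw [← Set.image_preimage_eq {μ : Fin d → ℤ | (fun i => (μ i : ℝ) / n) ∈ s} hsurj.2]
    rw [Set.ncard_image_of_injective _ hsurj.1]
  rw [hcard2, hcard1]
  ring

/-- Lattice point counting: for a bounded measurable set with null frontier, the number of
lattice points of the lattice `(1/n)ℤᵈ` inside `s`, divided by `n ^ d`, tends to the volume. -/
lemma core_count {d : ℕ} (s : Set (Fin d → ℝ)) (hb : Bornology.IsBounded s)
    (hm : MeasurableSet s) (hf : volume (frontier s) = 0) :
    Tendsto (fun n : ℕ => ({μ : Fin d → ℤ | (fun i => (μ i : ℝ) / n) ∈ s}.ncard : ℝ) / (n : ℝ) ^ d)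
      atTop (nhds (volume s).toReal) := by
  set F := s.indicator (fun _ => (1 : ℝ)) with hF
  obtain ⟨B, hB, hsB⟩ := BoxIntegral.le_hasIntegralVertices_of_isBounded hb
  have hcont : ∀ᵐ x : Fin d → ℝ, ContinuousAt F x := by
    filter_upwards [(measure_eq_zero_iff_ae_notMem (μ := (volume : Measure (Fin d → ℝ)))).mp hf]
      with x hx
    by_cases hxi : x ∈ interior s
    · refine Filter.EventuallyEq.continuousAt (y := 1) ?_
      filter_upwards [isOpen_interior.mem_nhds hxi] with y hy
      exact Set.indicator_of_mem (interior_subset hy) _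
    · have hxc : x ∉ closure s := fun h => hx ⟨h, hxi⟩
      refine Filter.EventuallyEq.continuousAt (y := 0) ?_
      filter_upwards [isOpen_compl_iff.mpr isClosed_closure |>.mem_nhds hxc] with y hy
      exact Set.indicator_of_notMem (fun hys => hy (subset_closure hys)) _
  have hbound : ∃ C : ℝ, ∀ x ∈ Box.Icc B, ‖F x‖ ≤ C := by
    refine ⟨1, fun x _ => ?_⟩
    by_cases hxs : x ∈ s <;> simp [hF, hxs]
  have hIvalue : HasIntegral B IntegrationParams.Riemann F
      (volume : Measure (Fin d → ℝ)).toBoxAdditive.toSMul ((volume s).toReal) := by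
    have h := AEContinuous.hasBoxIntegral (volume : Measure (Fin d → ℝ)) hbound hcont
      IntegrationParams.Riemann
    have hint : ∫ x in (B : Set (Fin d → ℝ)), F x = (volume s).toReal := by
      rw [hF, MeasureTheory.setIntegral_indicator hm, Set.inter_eq_right.mpr hsB,
        setIntegral_const, smul_eq_mul, mul_one]
      rfl
    rwa [hint] at h
  rw [Metric.tendsto_atTop]
  intro ε hε
  obtain ⟨r, hr, Hr⟩ := hasIntegral_iff.mp hIvalue (ε / 2) (by positivity)
  set r0 : ℝ := (r 1 0 : ℝ) with hr0def
  have hr0 : 0 < r0 := (r 1 0).2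
  refine ⟨⌈1 / r0⌉₊ + 1, fun n hn => ?_⟩
  have hn0 : 0 < n := lt_of_lt_of_le (Nat.succ_pos _) hn
  have : NeZero n := ⟨hn0.ne'⟩
  have h1n : 1 / (n : ℝ) ≤ r0 := by
    have h1 : (1 : ℝ) / r0 ≤ n := by
      refine le_trans (Nat.le_ceil _) ?_
      exact_mod_cast Nat.le_of_succ_le hn
    rw [div_le_iff₀ (by exact_mod_cast hn0)]
    rw [div_le_iff₀ hr0] at h1
    linarith [h1]
  have hbase : IntegrationParams.Riemann.MemBaseSet B 1 (r 1) (prepartition n B) := by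
    refine ⟨?_, fun _ => prepartition_isHenstock n B, fun h => absurd h (by decide),
      fun h => absurd h (by decide)⟩
    have hconst : r 1 = fun _ => r 1 0 := funext (hr 1 rfl)
    rw [hconst]
    exact prepartition_isSubordinate n B hr0 h1n
  have key := Hr 1 (prepartition n B) hbase (prepartition_isPartition n hB)
  rw [sum_eq n s hB hsB] at key
  exact lt_of_le_of_lt key (by linarith)

end Aux

lemma coneConvex {E : Type*} [AddCommGroup E] [Module ℝ E] {K : Set E} (hK : Convex ℝ K)
    (hne : K.Nonempty) :
    Convex ℝ {v | ∃ t : ℝ, 0 ≤ t ∧ ∃ w ∈ K, v = t • w} := by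
  rintro v₁ ⟨t₁, ht₁, w₁, hw₁, rfl⟩ v₂ ⟨t₂, ht₂, w₂, hw₂, rfl⟩ p q hp hq hpq
  rcases eq_or_lt_of_le (add_nonneg (mul_nonneg hp ht₁) (mul_nonneg hq ht₂)) with hT | hT
  · obtain ⟨w₀, hw₀⟩ := hne
    have h1 : p * t₁ = 0 ∧ q * t₂ = 0 := by
      constructor <;> nlinarith [mul_nonneg hp ht₁, mul_nonneg hq ht₂]
    refine ⟨0, le_refl _, w₀, hw₀, ?_⟩
    rw [smul_smul, smul_smul, h1.1, h1.2, zero_smul, zero_smul, zero_smul, add_zero]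
  · set T := p * t₁ + q * t₂ with hTdef
    refine ⟨T, hT.le, (p * t₁ / T) • w₁ + (q * t₂ / T) • w₂,
      hK hw₁ hw₂ (by positivity) (by positivity) (by field_simp; rfl), ?_⟩
    rw [smul_add, smul_smul, smul_smul, smul_smul, smul_smul]
    congr 1 <;> [skip; skip] <;> congr 1 <;> field_simp

lemma coneSmulMem {E : Type*} [AddCommGroup E] [Module ℝ E] [TopologicalSpace E]
    [ContinuousSMul ℝ E] {K : Set E} {c : ℝ} (hc : 0 < c) {v : E}
    (hv : v ∈ closure {v | ∃ t : ℝ, 0 ≤ t ∧ ∃ w ∈ K, v = t • w}) :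
    c • v ∈ closure {v | ∃ t : ℝ, 0 ≤ t ∧ ∃ w ∈ K, v = t • w} := by
  set C := {v : E | ∃ t : ℝ, 0 ≤ t ∧ ∃ w ∈ K, v = t • w}
  have hmap : Set.MapsTo (fun x : E => c • x) C C := by
    rintro x ⟨t, ht, w, hw, rfl⟩
    exact ⟨c * t, by positivity, w, hw, (smul_smul c t w)⟩
  exact hmap.closure (continuous_const_smul c) hv

theorem stmt_14 (d : ℕ) (Γ : Set (ℤ × (Fin d → ℤ)))
    (hadd : ∀ x ∈ Γ, ∀ y ∈ Γ, x + y ∈ Γ)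
    (hpos : ∀ x ∈ Γ, 0 ≤ x.1)
    (hgen : AddSubgroup.closure Γ = (⊤ : AddSubgroup (ℤ × (Fin d → ℤ))))
    (hfin : ∀ k : ℤ, {x ∈ Γ | x.1 = k}.Finite)
    -- `∇` is the closed convex cone generated by `Γ`
    (nabla : Set (ℝ × (Fin d → ℝ)))
    (hnabla : nabla = closure {v | ∃ t : ℝ, 0 ≤ t ∧
      ∃ w ∈ convexHull ℝ (latticeEmb d '' Γ), v = t • w})
    -- `Δ` is the slice of `∇` at height 1, assumed compact with nonempty interior
    (Δ : Set (Fin d → ℝ)) (hΔ : Δ = {x | ((1 : ℝ), x) ∈ nabla})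
    (hΔcompact : IsCompact Δ) (hΔfull : (interior Δ).Nonempty)
    -- Khovanskii's property
    (hKh : ∃ γ ∈ Γ, ∀ z : ℤ × (Fin d → ℤ),
      latticeEmb d z - latticeEmb d γ ∈ nabla → z ∈ Γ) :
    Tendsto (fun k : ℕ => ({x ∈ Γ | x.1 = (k : ℤ)}.ncard : ℝ) / (k : ℝ) ^ d)
      atTop (nhds (volume Δ).toReal) := by
  classical
  obtain ⟨γ, hγΓ, hγKh⟩ := hKh
  set K : Set (ℝ × (Fin d → ℝ)) := convexHull ℝ (latticeEmb d '' Γ) with hKdef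
  have hKne : K.Nonempty := ⟨latticeEmb d γ, subset_convexHull ℝ _ ⟨γ, hγΓ, rfl⟩⟩
  have hCconv : Convex ℝ {v | ∃ t : ℝ, 0 ≤ t ∧ ∃ w ∈ K, v = t • w} :=
    coneConvex (convex_convexHull ℝ _) hKne
  have hnconv : Convex ℝ nabla := by rw [hnabla]; exact hCconv.closure
  have hsmul : ∀ c : ℝ, 0 < c → ∀ v ∈ nabla, c • v ∈ nabla := by
    intro c hc v hv
    rw [hnabla] at hv ⊢
    exact coneSmulMem hc hv
  have hΓsub : ∀ x ∈ Γ, latticeEmb d x ∈ nabla := by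
    intro x hx
    rw [hnabla]
    exact subset_closure ⟨1, zero_le_one, latticeEmb d x,
      subset_convexHull ℝ _ ⟨x, hx, rfl⟩, (one_smul ℝ _).symm⟩
  have hslice : ∀ t : ℝ, 0 < t → ∀ y : Fin d → ℝ,
      (((t, y) : ℝ × (Fin d → ℝ)) ∈ nabla ↔ (fun i => y i / t) ∈ Δ) := by
    intro t ht y
    rw [hΔ, Set.mem_setOf_eq]
    constructor
    · intro h
      have h2 := hsmul t⁻¹ (by positivity) _ h
      have heq : t⁻¹ • ((t, y) : ℝ × (Fin d → ℝ)) = ((1:ℝ), fun i => y i / t) := by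
        simp only [Prod.smul_mk, smul_eq_mul, Prod.mk.injEq]
        exact ⟨inv_mul_cancel₀ ht.ne', funext fun i => by
          simp [Pi.smul_apply, smul_eq_mul, div_eq_inv_mul]⟩
      rwa [heq] at h2
    · intro h
      have h2 := hsmul t ht _ h
      have heq : t • (((1:ℝ), fun i => y i / t) : ℝ × (Fin d → ℝ)) = (t, y) := by
        rw [Prod.smul_mk]
        refine Prod.ext ?_ ?_
        · simp
        · funext i
          simp only [Pi.smul_apply, smul_eq_mul]
          field_simp
      rwa [heq] at h2
  have hΔconv : Convex ℝ Δ := by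
    intro x hx y hy p q hp hq hpq
    rw [hΔ, Set.mem_setOf_eq] at hx hy ⊢
    have h2 : (((1:ℝ), p • x + q • y) : ℝ × (Fin d → ℝ)) = p • ((1:ℝ), x) + q • ((1:ℝ), y) := by
      rw [Prod.smul_mk, Prod.smul_mk, Prod.mk_add_mk]
      refine Prod.ext ?_ ?_
      · simp [hpq]
      · rfl
    rw [h2]
    exact hnconv hx hy hp hq hpq
  have hΔbdd : Bornology.IsBounded Δ := hΔcompact.isBounded
  have hfront : volume (frontier Δ) = 0 := hΔconv.addHaar_frontier volume
  have hU := core_count Δ hΔbdd hΔcompact.isClosed.measurableSet hfront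
  set a0 : ℕ := γ.1.toNat with ha0def
  have ha0 : ((a0 : ℤ)) = γ.1 := Int.toNat_of_nonneg (hpos γ hγΓ)
  -- upper bound
  have hupper : ∀ k : ℕ, 1 ≤ k → ({x ∈ Γ | x.1 = (k:ℤ)}.ncard : ℝ) ≤
      ({μ : Fin d → ℤ | (fun i => (μ i : ℝ) / k) ∈ Δ}.ncard : ℝ) := by
    intro k hk
    have hkpos : (0:ℝ) < (k:ℝ) := by exact_mod_cast hk
    have hfinT := latFinite Δ hΔbdd k hkpos
    have hle := Set.ncard_le_ncard_of_injOn (s := {x ∈ Γ | x.1 = (k:ℤ)})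
      (t := {μ : Fin d → ℤ | (fun i => (μ i : ℝ) / k) ∈ Δ}) (fun x : ℤ × (Fin d → ℤ) => x.2)
      (fun x hx => by
        obtain ⟨hxΓ, hx1⟩ := hx
        have h1 := hΓsub x hxΓ
        have h2 : latticeEmb d x = (((k:ℕ):ℝ), fun i => (x.2 i : ℝ)) := by
          rw [latticeEmb, hx1]
          norm_cast
        rw [h2] at h1
        exact (hslice (k:ℝ) hkpos _).mp h1)
      (fun x hx y hy hxy => Prod.ext (hx.2.trans hy.2.symm) hxy) hfinT
    exact_mod_cast hle
  -- lower bound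
  have hlower : ∀ k : ℕ, a0 < k →
      ({μ : Fin d → ℤ | (fun i => (μ i : ℝ) / ((k - a0 : ℕ) : ℝ)) ∈ Δ}.ncard : ℝ) ≤
      ({x ∈ Γ | x.1 = (k:ℤ)}.ncard : ℝ) := by
    intro k hk
    have hmpos : (0:ℝ) < ((k - a0 : ℕ) : ℝ) := by
      have : 0 < k - a0 := Nat.sub_pos_of_lt hk
      exact_mod_cast this
    have hle := Set.ncard_le_ncard_of_injOn (s := {μ : Fin d → ℤ | (fun i => (μ i : ℝ) / ((k - a0 : ℕ) : ℝ)) ∈ Δ})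
      (t := {x ∈ Γ | x.1 = (k:ℤ)}) (fun μ : Fin d → ℤ => (((k:ℤ), μ + γ.2) : ℤ × (Fin d → ℤ)))
      (fun μ hμ => by
        simp only [Set.mem_setOf_eq] at hμ
        have h1 : ((((k - a0 : ℕ) : ℝ), fun i => (μ i : ℝ)) : ℝ × (Fin d → ℝ)) ∈ nabla :=
          (hslice _ hmpos _).mpr hμ
        refine ⟨hγKh ((k:ℤ), μ + γ.2) ?_, rfl⟩
        have h2 : latticeEmb d ((k:ℤ), μ + γ.2) - latticeEmb d γ
            = ((((k - a0 : ℕ) : ℝ), fun i => (μ i : ℝ)) : ℝ × (Fin d → ℝ)) := by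
          rw [latticeEmb, latticeEmb, Prod.mk_sub_mk]
          refine congrArg₂ Prod.mk ?_ ?_
          · rw [Nat.cast_sub hk.le]
            push_cast [← ha0]
            ring
          · funext i
            simp only [Pi.sub_apply, Pi.add_apply]
            push_cast
            ring
        rw [h2]
        exact h1)
      (fun μ _ ν _ h => add_right_cancel (Prod.ext_iff.mp h).2) (hfin (k:ℤ))
    exact_mod_cast hle
  -- limits
  set V := (volume Δ).toReal with hVdef
  set U : ℕ → ℝ := fun n => ({μ : Fin d → ℤ | (fun i => (μ i : ℝ) / n) ∈ Δ}.ncard : ℝ) with hUdef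
  have hUlim : Tendsto (fun n : ℕ => U n / (n:ℝ)^d) atTop (nhds V) := hU
  have h1 : Tendsto (fun k : ℕ => U (k - a0) / (((k - a0 : ℕ)):ℝ)^d) atTop (nhds V) :=
    hUlim.comp (tendsto_sub_atTop_nat a0)
  have h2 : Tendsto (fun k : ℕ => ((((k - a0 : ℕ)):ℝ) / (k:ℝ))^d) atTop (nhds 1) := by
    have hbase : Tendsto (fun k : ℕ => 1 - (a0:ℝ)/(k:ℝ)) atTop (nhds 1) := by
      have := tendsto_const_nhds (x := (1:ℝ)) (f := atTop (α := ℕ)) |>.sub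
        (tendsto_const_div_atTop_nhds_zero_nat (a0:ℝ))
      simpa using this
    have h3 := hbase.pow d
    rw [one_pow] at h3
    refine Tendsto.congr' ?_ h3
    filter_upwards [eventually_ge_atTop a0, eventually_ge_atTop 1] with k hka hk1
    have hk0 : (k:ℝ) ≠ 0 := by
      have : (0:ℝ) < (k:ℝ) := by exact_mod_cast hk1
      exact this.ne'
    rw [Nat.cast_sub hka]
    field_simp
  have hLlim : Tendsto (fun k : ℕ => U (k - a0) / (k:ℝ)^d) atTop (nhds V) := by
    have hmul := h1.mul h2
    rw [mul_one] at hmul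
    refine Tendsto.congr' ?_ hmul
    filter_upwards [eventually_ge_atTop (a0+1)] with k hk
    have hm : (0:ℝ) < (((k - a0 : ℕ)):ℝ) := by
      have : 0 < k - a0 := Nat.sub_pos_of_lt hk
      exact_mod_cast this
    have hk0 : (0:ℝ) < (k:ℝ) := by
      have : 0 < k := lt_of_lt_of_le (Nat.succ_pos _) hk
      exact_mod_cast this
    rw [div_pow]
    field_simp
  refine tendsto_of_tendsto_of_tendsto_of_le_of_le' hLlim hUlim ?_ ?_
  · filter_upwards [eventually_ge_atTop (a0+1)] with k hk
    have hklt : a0 < k := lt_of_lt_of_le (Nat.lt_succ_self a0) hk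
    have hk0 : (0:ℝ) < (k:ℝ)^d := by
      have : 0 < k := lt_of_le_of_lt (Nat.zero_le _) hklt
      positivity
    exact (div_le_div_iff_of_pos_right hk0).mpr (hlower k hklt)
  · filter_upwards [eventually_ge_atTop 1] with k hk
    have hk0 : (0:ℝ) < (k:ℝ)^d := by
      have : 0 < k := hk
      positivity
    exact (div_le_div_iff_of_pos_right hk0).mpr (hupper k hk)
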